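/- Genus 2 commutation relation: with the same definitions, [L_4, L_6] = (2/5)(−5λ_{10} L_0 + 3λ₈ L_2 − 3λ₆ L_4 + 5λ₄ L_6). -/
import Mathlib


open MvPolynomial

/-- Variables: `X 0 = λ₄`, `X 1 = λ₆`, `X 2 = λ₈`, `X 3 = λ₁₀`. -/
noncomputable abbrev l4 : MvPolynomial (Fin 4) ℚ := X 0
noncomputable abbrev l6 : MvPolynomial (Fin 4) ℚ := X 1
noncomputable abbrev l8 : MvPolynomial (Fin 4) ℚ := X 2
noncomputable abbrev l10 : MvPolynomial (Fin 4) ℚ := X 3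

/-- The genus-2 matrix `T = (T_{2k+2,2s−2})`, rows and columns indexed by
`0,1,2,3 ↔ λ₄,λ₆,λ₈,λ₁₀`. -/
noncomputable def T2 : Matrix (Fin 4) (Fin 4) (MvPolynomial (Fin 4) ℚ) :=
  ![![4 * l4, 6 * l6, 8 * l8, 10 * l10],
    ![6 * l6, 8 * l8 - C (12/5 : ℚ) * l4 ^ 2, 10 * l10 - C (8/5 : ℚ) * l4 * l6,
      - (C (4/5 : ℚ) * l4 * l8)],
    ![8 * l8, 10 * l10 - C (8/5 : ℚ) * l4 * l6, 4 * l4 * l8 - C (12/5 : ℚ) * l6 ^ 2,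
      6 * l4 * l10 - C (6/5 : ℚ) * l6 * l8],
    ![10 * l10, - (C (4/5 : ℚ) * l4 * l8), 6 * l4 * l10 - C (6/5 : ℚ) * l6 * l8,
      4 * l6 * l10 - C (8/5 : ℚ) * l8 ^ 2]]

/-- The derivation `L_{2k} = Σ_s T_{2k+2,2s−2} ∂/∂λ_{2s}` of `ℚ[λ₄,λ₆,λ₈,λ₁₀]`;
`Lg2 k` is `L_{2k}`. -/
noncomputable def Lg2 (k : Fin 4) (p : MvPolynomial (Fin 4) ℚ) : MvPolynomial (Fin 4) ℚ :=
  ∑ j : Fin 4, T2 k j * pderiv j p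


lemma pderiv_ofNat' {σ : Type*} [DecidableEq σ] (i : σ) (n : ℕ) [n.AtLeastTwo] :
    pderiv i (no_index (OfNat.ofNat n) : MvPolynomial σ ℚ) = 0 := by
  rw [show (OfNat.ofNat n : MvPolynomial σ ℚ) = C (OfNat.ofNat n) from (map_ofNat C n).symm]
  exact pderiv_C

lemma pderiv_comm' {σ : Type*} [DecidableEq σ] (i j : σ) (p : MvPolynomial σ ℚ) :
    pderiv i (pderiv j p) = pderiv j (pderiv i p) := by
  induction p using MvPolynomial.induction_on with
  | C a => simp
  | add p q hp hq => simp [hp, hq]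
  | mul_X p n hp =>
      simp only [pderiv_mul, hp, pderiv_X, Pi.single_apply]
      split_ifs <;> simp_all [pderiv_mul, Pi.single_apply] <;> ring

set_option maxHeartbeats 2000000 in
/-- `[L₄, L₆] = (2/5)(−5λ₁₀ L₀ + 3λ₈ L₂ − 3λ₆ L₄ + 5λ₄ L₆)`. -/
theorem genus2_bracket_L4_L6 (p : MvPolynomial (Fin 4) ℚ) :
    Lg2 2 (Lg2 3 p) - Lg2 3 (Lg2 2 p)
      = C (2/5 : ℚ) * (-(5 * l10 * Lg2 0 p) + 3 * l8 * Lg2 1 p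
          - 3 * l6 * Lg2 2 p + 5 * l4 * Lg2 3 p) := by
  simp only [Lg2, T2, Fin.sum_univ_four, Matrix.cons_val_zero, Matrix.cons_val_one,
    Matrix.head_cons, Matrix.cons_val_two, Matrix.tail_cons, Matrix.cons_val_three,
    Matrix.head_fin_const]
  simp [pderiv_mul, pderiv_X, pderiv_C, pderiv_one, Pi.single_apply, pderiv_pow, pderiv_ofNat']
  rw [pderiv_comm' 1 0 p, pderiv_comm' 2 0 p, pderiv_comm' 3 0 p,
      pderiv_comm' 2 1 p, pderiv_comm' 3 1 p, pderiv_comm' 3 2 p]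
  apply MvPolynomial.funext
  intro x
  simp
  ring
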